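/- Fix integers p ≥ 2 and 1 ≤ m < p. For σ = (σ_1,...,σ_m) a tuple of permutations of [p], define Ψ_σ ∈ ℝ^{p^m} by Ψ_σ(x) = 1(Σ_{i=1}^m σ_i(x_i) ≡ 0 mod p). Then for any unit vector v ∈ ℝ^{p^m} orthogonal to V_s (the span of all slice indicator vectors s_{i,a}), E_{σ ∼ Unif(S_p)^m}[⟨Ψ_σ, v⟩²] ≤ (1/p)·exp((m−1)/(p−1)). -/

import Mathlib

open Finset
section BASE

section helpers
variable {ι : Type*} [Fintype ι] [DecidableEq ι]

lemma sum_prod_pi {β : Type*} [Fintype β] (f : ι → β → ℝ) :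
    ∑ z : ι → β, ∏ i, f i (z i) = ∏ i, ∑ b, f i b := by
  rw [Finset.prod_univ_sum, Fintype.piFinset_univ]

lemma ite_inst {α : Sort*} {P : Prop} {h1 h2 : Decidable P} (x y : α) :
    @ite α P h1 x y = @ite α P h2 x y :=
  congrArg (fun d => @ite α P d x y) (Subsingleton.elim h1 h2)

lemma ind_mul_ind (A B : Prop) [Decidable A] [Decidable B] :
    (if A then (1:ℝ) else 0) * (if B then (1:ℝ) else 0) = if A ∧ B then 1 else 0 := by
  by_cases hA : A <;> by_cases hB : B <;> simp [hA, hB]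

lemma eval_two {β : Type*} [Fintype β] [DecidableEq β] (A B : ι → β)
    (g : (ι → β) → (ι → β) → ℝ) :
    ∑ a : ι → β, ∑ b : ι → β,
      (∏ i, if A i = a i ∧ B i = b i then (1:ℝ) else 0) * g a b = g A B := by
  have h : ∀ a b : ι → β,
      (∏ i, if A i = a i ∧ B i = b i then (1:ℝ) else 0)
        = (if A = a then (1:ℝ) else 0) * (if B = b then (1:ℝ) else 0) := by
    intro a b
    rw [ind_mul_ind, Finset.prod_boole]
    congr 1
    simp [funext_iff, forall_and]
  simp_rw [h, mul_assoc, ← Finset.mul_sum, ite_mul, one_mul, zero_mul,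
    Finset.sum_ite_eq, mem_univ, if_true]

end helpers

section perm
variable {β : Type*} [Fintype β] [DecidableEq β]

lemma exists_perm_two {a b a' b' : β} (hab : a ≠ b) (hab' : a' ≠ b') :
    ∃ s : Equiv.Perm β, s a = a' ∧ s b = b' := by
  have h1 : (Equiv.swap a a') a = a' := Equiv.swap_apply_left a a'
  have hca' : (Equiv.swap a a') b ≠ a' := by
    intro h
    exact hab (((Equiv.swap a a').injective (h.trans h1.symm))).symm
  refine ⟨(Equiv.swap a a').trans (Equiv.swap ((Equiv.swap a a') b) b'), ?_, ?_⟩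
  · simp only [Equiv.trans_apply, h1]
    exact Equiv.swap_apply_of_ne_of_ne (Ne.symm hca') hab'
  · simp only [Equiv.trans_apply]
    exact Equiv.swap_apply_left _ b'

lemma permFiber1 (u : β) (a a' : β) :
    ∑ g : Equiv.Perm β, (if g u = a then (1:ℝ) else 0)
      = ∑ g : Equiv.Perm β, (if g u = a' then (1:ℝ) else 0) := by
  refine Fintype.sum_equiv (Equiv.mulLeft (Equiv.swap a a')) _ _ (fun g => ?_)
  have : (Equiv.swap a a') (g u) = a' ↔ g u = a := by
    constructor
    · intro h
      exact (Equiv.swap a a').injective (by rw [h, Equiv.swap_apply_left])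
    · intro h; rw [h, Equiv.swap_apply_left]
  simp [Equiv.Perm.mul_apply, this]

lemma permCount1 (u : β) (a : β) :
    (Fintype.card β : ℝ) * ∑ g : Equiv.Perm β, (if g u = a then (1:ℝ) else 0)
      = Fintype.card (Equiv.Perm β) := by
  have h : (Fintype.card (Equiv.Perm β) : ℝ)
      = ∑ a' : β, ∑ g : Equiv.Perm β, (if g u = a' then (1:ℝ) else 0) := by
    rw [Finset.sum_comm]
    simp [Finset.sum_ite_eq']
  rw [h, Finset.sum_congr rfl (fun a' _ => permFiber1 u a' a), Finset.sum_const,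
    Finset.card_univ, nsmul_eq_mul]

lemma permFiber2 {u w : β} (huw : u ≠ w) {a b a' b' : β} (hab : a ≠ b) (hab' : a' ≠ b') :
    ∑ g : Equiv.Perm β, (if g u = a ∧ g w = b then (1:ℝ) else 0)
      = ∑ g : Equiv.Perm β, (if g u = a' ∧ g w = b' then (1:ℝ) else 0) := by
  obtain ⟨s, hsa, hsb⟩ := exists_perm_two hab hab'
  refine Fintype.sum_equiv (Equiv.mulLeft s) _ _ (fun g => ?_)
  have h1 : s (g u) = a' ↔ g u = a := by
    constructor
    · intro h; exact s.injective (by rw [h, hsa])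
    · intro h; rw [h, hsa]
  have h2 : s (g w) = b' ↔ g w = b := by
    constructor
    · intro h; exact s.injective (by rw [h, hsb])
    · intro h; rw [h, hsb]
  simp [Equiv.Perm.mul_apply, h1, h2]

lemma permCount2 {u w : β} (huw : u ≠ w) {a b : β} (hab : a ≠ b) :
    (Fintype.card β : ℝ) * ((Fintype.card β : ℝ) - 1)
        * ∑ g : Equiv.Perm β, (if g u = a ∧ g w = b then (1:ℝ) else 0)
      = Fintype.card (Equiv.Perm β) := by
  have h : (Fintype.card (Equiv.Perm β) : ℝ)
      = ∑ a' : β, ∑ b' : β, ∑ g : Equiv.Perm β,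
          (if g u = a' ∧ g w = b' then (1:ℝ) else 0) := by
    have e1 : ∀ g : Equiv.Perm β,
        ∑ a' : β, ∑ b' : β, (if g u = a' ∧ g w = b' then (1:ℝ) else 0) = 1 := by
      intro g
      simp [ite_and, Finset.sum_ite_eq]
    calc (Fintype.card (Equiv.Perm β) : ℝ) = ∑ _g : Equiv.Perm β, (1:ℝ) := by simp
    _ = ∑ g : Equiv.Perm β, ∑ a' : β, ∑ b' : β,
          (if g u = a' ∧ g w = b' then (1:ℝ) else 0) := by
        exact Finset.sum_congr rfl fun g _ => (e1 g).symm
    _ = ∑ a' : β, ∑ g : Equiv.Perm β, ∑ b' : β,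
          (if g u = a' ∧ g w = b' then (1:ℝ) else 0) := Finset.sum_comm
    _ = _ := Finset.sum_congr rfl fun a' _ => Finset.sum_comm
  set S : ℝ := ∑ g : Equiv.Perm β, (if g u = a ∧ g w = b then (1:ℝ) else 0) with hS
  have hval : ∀ a' b' : β,
      (∑ g : Equiv.Perm β, (if g u = a' ∧ g w = b' then (1:ℝ) else 0))
        = if a' = b' then 0
          else S := by
    intro a' b'
    by_cases h' : a' = b'
    · subst h'
      rw [if_pos rfl]
      refine Finset.sum_eq_zero (fun g _ => ?_)
      have : ¬ (g u = a' ∧ g w = a') := by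
        rintro ⟨h1, h2⟩
        exact huw (g.injective (h1.trans h2.symm))
      simp [this]
    · rw [if_neg h']
      exact (permFiber2 huw hab h').symm
  have h2 : ∑ a' : β, ∑ b' : β, ∑ g : Equiv.Perm β,
        (if g u = a' ∧ g w = b' then (1:ℝ) else 0)
      = (Fintype.card β : ℝ) * ((Fintype.card β : ℝ) - 1)
          * S := by
    simp_rw [hval]
    have hb : ∀ a' : β, ∑ b' : β,
        (if a' = b' then (0:ℝ)
          else S)
        = ((Fintype.card β : ℝ) - 1)
            * S := by
      intro a'
      have hpt : ∀ b' : β, (if a' = b' then (0:ℝ)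
          else S)
          = (S)
            - (if a' = b' then S else 0) := by
        intro b'; by_cases hb' : a' = b' <;> simp [hb']
      simp_rw [hpt]
      rw [Finset.sum_sub_distrib, Finset.sum_const, Finset.sum_ite_eq, if_pos (mem_univ a'),
        Finset.card_univ, nsmul_eq_mul]
      ring
    simp_rw [hb]
    rw [Finset.sum_const, Finset.card_univ, nsmul_eq_mul]
    ring
  rw [h]
  exact h2.symm

end perm

section zs
variable {ι : Type*} [Fintype ι] [DecidableEq ι] {p : ℕ} [NeZero p]

lemma sum_update_eq (g : ι → ZMod p) (i : ι) (c : ZMod p) :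
    ∑ j, Function.update g i c j = (∑ j, g j) - g i + c := by
  rw [Finset.sum_update_of_mem (mem_univ i), ← Finset.erase_eq,
    Finset.sum_erase_eq_sub (mem_univ i)]
  ring

lemma zsum_fiber [Nonempty ι] (s t : ZMod p) :
    ∑ a : ι → ZMod p, (if (∑ i, a i) = t then (1:ℝ) else 0)
      = ∑ a : ι → ZMod p, (if (∑ i, a i) = s then (1:ℝ) else 0) := by
  classical
  obtain ⟨i0⟩ := ‹Nonempty ι›
  set c : ZMod p := s - t with hc
  refine Fintype.sum_equiv ⟨fun a => Function.update a i0 (a i0 + c),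
    fun a => Function.update a i0 (a i0 - c), ?_, ?_⟩ _ _ (fun a => ?_)
  · intro a
    simp only [Function.update_idem, Function.update_self]
    rw [add_sub_cancel_right, Function.update_eq_self]
  · intro a
    simp only [Function.update_idem, Function.update_self]
    rw [sub_add_cancel, Function.update_eq_self]
  · simp only [Equiv.coe_fn_mk]
    rw [sum_update_eq]
    have : (∑ j, a j) - a i0 + (a i0 + c) = (∑ j, a j) + c := by ring
    rw [this]
    congr 1
    have : (∑ j, a j) + c = s ↔ (∑ j, a j) = t := by
      rw [hc]
      constructor
      · intro h
        have := congrArg (fun z => z - (s - t)) h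
        simpa [sub_sub_cancel] using this
      · intro h; rw [h]; ring
    exact (propext this).symm

lemma zsum_count [Nonempty ι] :
    (p:ℝ) * ∑ a : ι → ZMod p, (if (∑ i, a i) = 0 then (1:ℝ) else 0)
      = (p:ℝ) ^ (Fintype.card ι) := by
  have htot : ∑ t : ZMod p, ∑ a : ι → ZMod p, (if (∑ i, a i) = t then (1:ℝ) else 0)
      = (p:ℝ) ^ (Fintype.card ι) := by
    rw [Finset.sum_comm]
    have : ∀ a : ι → ZMod p,
        ∑ t : ZMod p, (if (∑ i, a i) = t then (1:ℝ) else 0) = 1 := by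
      intro a; rw [Finset.sum_ite_eq]; simp
    simp_rw [this]
    rw [Finset.sum_const, Finset.card_univ, Fintype.card_fun, ZMod.card, nsmul_eq_mul]
    push_cast
    ring
  rw [← htot, Finset.sum_congr rfl (fun t _ => zsum_fiber (0:ZMod p) t),
    Finset.sum_const, Finset.card_univ, ZMod.card, nsmul_eq_mul]

lemma ZS_lemma (T : Finset ι) (s : ZMod p) :
    (p:ℝ) * ∑ g : ι → ZMod p,
        (if ((∀ i, i ∉ T → g i = 0) ∧ (∀ i ∈ T, g i ≠ 0) ∧ (∑ i, g i) = s)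
          then (1:ℝ) else 0)
      = ((p:ℝ) - 1) ^ T.card - (-1:ℝ) ^ T.card
        + (p:ℝ) * (-1:ℝ) ^ T.card * (if s = 0 then 1 else 0) := by
  classical
  induction T using Finset.induction_on generalizing s with
  | empty =>
      have hpt : ∀ g : ι → ZMod p,
          ((∀ i, i ∉ (∅:Finset ι) → g i = 0) ∧ (∀ i ∈ (∅:Finset ι), g i ≠ 0)
              ∧ (∑ i, g i) = s)
            ↔ ((g = fun _ => 0) ∧ s = 0) := by
        intro g
        constructor
        · rintro ⟨h1, -, h3⟩
          have hg : g = fun _ => 0 := funext fun i => h1 i (notMem_empty i)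
          refine ⟨hg, ?_⟩
          rw [← h3, hg]; simp
        · rintro ⟨hg, hs⟩
          subst hg; subst hs
          simp
      simp_rw [hpt, ite_and]
      rw [Finset.sum_ite_eq' univ (fun _ => (0:ZMod p)) (fun _ => if s = 0 then (1:ℝ) else 0)]
      simp only [mem_univ, if_true, Finset.card_empty, pow_zero]
      ring
  | @insert i T hiT ih =>
      have hsplit : (∑ g : ι → ZMod p, if ((∀ j, j ∉ insert i T → g j = 0)
            ∧ (∀ j ∈ insert i T, g j ≠ 0) ∧ (∑ j, g j) = s) then (1:ℝ) else 0)
          = ∑ c : ZMod p, ∑ g : ι → ZMod p,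
              if (g i = c ∧ (∀ j, j ∉ insert i T → g j = 0)
                ∧ (∀ j ∈ insert i T, g j ≠ 0) ∧ (∑ j, g j) = s) then (1:ℝ) else 0 := by
        rw [Finset.sum_comm]
        refine (Finset.sum_congr rfl fun g _ => ?_).symm
        simp [ite_and, Finset.sum_ite_eq]
      have hzero : (∑ g : ι → ZMod p,
          if (g i = (0:ZMod p) ∧ (∀ j, j ∉ insert i T → g j = 0)
            ∧ (∀ j ∈ insert i T, g j ≠ 0) ∧ (∑ j, g j) = s) then (1:ℝ) else 0) = 0 := by
        refine Finset.sum_eq_zero fun g _ => ?_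
        have : ¬ (g i = (0:ZMod p) ∧ (∀ j, j ∉ insert i T → g j = 0)
            ∧ (∀ j ∈ insert i T, g j ≠ 0) ∧ (∑ j, g j) = s) := by
          rintro ⟨h1, -, h3, -⟩
          exact h3 i (mem_insert_self i T) h1
        exact if_neg this
      have key : ∀ c : ZMod p, c ≠ 0 →
          (∑ g : ι → ZMod p, if (g i = c ∧ (∀ j, j ∉ insert i T → g j = 0)
              ∧ (∀ j ∈ insert i T, g j ≠ 0) ∧ (∑ j, g j) = s) then (1:ℝ) else 0)
          = ∑ h : ι → ZMod p, (if ((∀ j, j ∉ T → h j = 0) ∧ (∀ j ∈ T, h j ≠ 0)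
              ∧ (∑ j, h j) = s - c) then (1:ℝ) else 0) := by
        intro c hc
        rw [Finset.sum_boole, Finset.sum_boole]
        norm_cast
        refine Finset.card_bij' (fun g _ => Function.update g i 0)
          (fun h _ => Function.update h i c) ?_ ?_ ?_ ?_
        · intro g hg
          simp only [mem_filter, mem_univ, true_and] at hg ⊢
          obtain ⟨hgi, hout, hin, hsum⟩ := hg
          refine ⟨?_, ?_, ?_⟩
          · intro j hj
            by_cases hji : j = i
            · subst hji; simp
            · rw [Function.update_of_ne hji]
              exact hout j (by simp [hji, hj])
          · intro j hj
            have hji : j ≠ i := fun h => hiT (h ▸ hj)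
            rw [Function.update_of_ne hji]
            exact hin j (mem_insert_of_mem hj)
          · rw [sum_update_eq, hsum, hgi]; ring
        · intro h hh
          simp only [mem_filter, mem_univ, true_and] at hh ⊢
          obtain ⟨hout, hin, hsum⟩ := hh
          have hhi : h i = 0 := hout i hiT
          refine ⟨Function.update_self i c h, ?_, ?_, ?_⟩
          · intro j hj
            have hji : j ≠ i := fun hj' => hj (hj' ▸ mem_insert_self i T)
            rw [Function.update_of_ne hji]
            exact hout j (fun hjT => hj (mem_insert_of_mem hjT))
          · intro j hj
            rcases mem_insert.mp hj with hj' | hj'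
            · subst hj'; rw [Function.update_self]; exact hc
            · have hji : j ≠ i := fun h' => hiT (h' ▸ hj')
              rw [Function.update_of_ne hji]
              exact hin j hj'
          · rw [sum_update_eq, hsum, hhi]; ring
        · intro g hg
          simp only [mem_filter, mem_univ, true_and] at hg
          show Function.update (Function.update g i 0) i c = g
          rw [Function.update_idem, ← hg.1, Function.update_eq_self]
        · intro h hh
          simp only [mem_filter, mem_univ, true_and] at hh
          have hhi : h i = 0 := hh.1 i hiT
          show Function.update (Function.update h i c) i 0 = h
          rw [Function.update_idem, ← hhi, Function.update_eq_self]
      -- now assemble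
      rw [hsplit, Finset.mul_sum]
      have hterm : ∀ c : ZMod p,
          (p:ℝ) * (∑ g : ι → ZMod p, if (g i = c ∧ (∀ j, j ∉ insert i T → g j = 0)
              ∧ (∀ j ∈ insert i T, g j ≠ 0) ∧ (∑ j, g j) = s) then (1:ℝ) else 0)
          = (if c = 0 then 0 else (((p:ℝ) - 1) ^ T.card - (-1:ℝ) ^ T.card))
            + (p:ℝ) * (-1:ℝ) ^ T.card
              * (if c = s then (if s = 0 then (0:ℝ) else 1) else 0) := by
        intro c
        by_cases hc : c = 0
        · subst hc
          rw [hzero, mul_zero, if_pos rfl]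
          by_cases hs : (0:ZMod p) = s
          · rw [if_pos hs, if_pos hs.symm]
            ring
          · rw [if_neg hs]
            ring
        · rw [key c hc, ih (s - c), if_neg hc]
          by_cases hcs : c = s
          · subst hcs
            have h1 : (c - c : ZMod p) = 0 := sub_self c
            rw [h1]
            simp [hc]
          · rw [if_neg hcs]
            have hne : s - c ≠ 0 := by
              intro h0
              apply hcs
              have h2 := congrArg (fun z => z + c) h0
              simp only [sub_add_cancel, zero_add] at h2
              exact h2.symm
            rw [if_neg hne]
      rw [Finset.sum_congr rfl fun c _ => hterm c]
      rw [Finset.sum_add_distrib]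
      have hA : ∑ c : ZMod p, (if c = 0 then (0:ℝ)
            else (((p:ℝ) - 1) ^ T.card - (-1:ℝ) ^ T.card))
          = ((p:ℝ) - 1) * (((p:ℝ) - 1) ^ T.card - (-1:ℝ) ^ T.card) := by
        have hpt2 : ∀ c : ZMod p, (if c = 0 then (0:ℝ)
              else (((p:ℝ) - 1) ^ T.card - (-1:ℝ) ^ T.card))
            = (((p:ℝ) - 1) ^ T.card - (-1:ℝ) ^ T.card)
              - (if c = 0 then (((p:ℝ) - 1) ^ T.card - (-1:ℝ) ^ T.card) else 0) := by
          intro c; by_cases hc : c = 0 <;> simp [hc]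
        simp_rw [hpt2]
        rw [Finset.sum_sub_distrib, Finset.sum_const, Finset.card_univ, ZMod.card,
          nsmul_eq_mul, Finset.sum_ite_eq' univ (0:ZMod p), if_pos (mem_univ _)]
        ring
      have hB : ∑ c : ZMod p, (p:ℝ) * (-1:ℝ) ^ T.card
            * (if c = s then (if s = 0 then (0:ℝ) else 1) else 0)
          = (p:ℝ) * (-1:ℝ) ^ T.card * (if s = 0 then (0:ℝ) else 1) := by
        rw [← Finset.mul_sum, Finset.sum_ite_eq' univ s, if_pos (mem_univ _)]
      rw [hA, hB, Finset.card_insert_of_notMem hiT]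
      by_cases hs : s = 0
      · rw [if_pos hs, if_pos hs]
        simp only [pow_succ]
        ring
      · rw [if_neg hs, if_neg hs]
        simp only [pow_succ]
        ring
end zs

end BASE

section pair
variable {p : ℕ} [NeZero p]

lemma coord_eval (hp : 2 ≤ p) (u w a b : ZMod p) :
    ∑ g : Equiv.Perm (ZMod p), (if g u = a ∧ g w = b then (1:ℝ) else 0)
      = if u = w
        then (if a = b then (Fintype.card (Equiv.Perm (ZMod p)) : ℝ) / p else 0)
        else (if a = b then 0
          else (Fintype.card (Equiv.Perm (ZMod p)) : ℝ) / ((p:ℝ) * ((p:ℝ) - 1))) := by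
  have hp0 : (p:ℝ) ≠ 0 := Nat.cast_ne_zero.mpr (NeZero.ne p)
  have hp2 : (2:ℝ) ≤ (p:ℝ) := by exact_mod_cast hp
  have hp1 : ((p:ℝ) - 1) ≠ 0 := by linarith
  by_cases huw : u = w
  · subst huw
    by_cases hab : a = b
    · subst hab
      rw [if_pos rfl, if_pos rfl]
      have h1 := permCount1 (β := ZMod p) u a
      rw [ZMod.card] at h1
      have h2 : ∀ g : Equiv.Perm (ZMod p),
          (if g u = a ∧ g u = a then (1:ℝ) else 0) = (if g u = a then (1:ℝ) else 0) := by
        intro g; by_cases h : g u = a <;> simp [h]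
      rw [Finset.sum_congr rfl fun g _ => h2 g, eq_div_iff hp0]
      linear_combination h1
    · rw [if_pos rfl, if_neg hab]
      refine Finset.sum_eq_zero fun g _ => if_neg ?_
      rintro ⟨h1', h2'⟩
      exact hab (h1'.symm.trans h2')
  · rw [if_neg huw]
    by_cases hab : a = b
    · rw [if_pos hab]
      refine Finset.sum_eq_zero fun g _ => if_neg ?_
      rintro ⟨h1', h2'⟩
      exact huw (g.injective (h1'.trans (hab ▸ h2'.symm)))
    · rw [if_neg hab]
      have h1 := permCount2 (β := ZMod p) huw hab
      rw [ZMod.card] at h1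
      rw [eq_div_iff (mul_ne_zero hp0 hp1)]
      linear_combination h1

lemma pair_sum (hp : 2 ≤ p) {m : ℕ} (hm : 1 ≤ m) (x y : Fin m → ZMod p) :
    ∑ σ : Fin m → Equiv.Perm (ZMod p),
        (if ((∑ i, σ i (x i)) = 0 ∧ (∑ i, σ i (y i)) = 0) then (1:ℝ) else 0)
      = (Fintype.card (Equiv.Perm (ZMod p)) : ℝ) ^ m
        * ((1 / (p:ℝ)^2) * (1 + ((p:ℝ) - 1)
            * (-1 / ((p:ℝ) - 1)) ^ (univ.filter (fun i => ¬ x i = y i)).card)) := by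
  classical
  have hp0 : (p:ℝ) ≠ 0 := Nat.cast_ne_zero.mpr (NeZero.ne p)
  have hp2 : (2:ℝ) ≤ (p:ℝ) := by exact_mod_cast hp
  have hp1 : ((p:ℝ) - 1) ≠ 0 := by linarith
  have hnem : Nonempty (Fin m) := ⟨⟨0, hm⟩⟩
  set N : ℝ := (Fintype.card (Equiv.Perm (ZMod p)) : ℝ) with hN
  set K1 : ℝ := N / p with hK1
  set K2 : ℝ := N / ((p:ℝ) * ((p:ℝ) - 1)) with hK2
  set D : Finset (Fin m) := univ.filter (fun i => ¬ x i = y i) with hD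
  set r : ℕ := D.card with hr
  set k : ℕ := (univ.filter (fun i => x i = y i)).card with hk
  have hkr : k + r = m := by
    rw [hk, hr, hD, Finset.card_filter_add_card_filter_not, card_univ,
      Fintype.card_fin]
  -- the per-coordinate factor
  set E : Fin m → ZMod p → ℝ := fun i δ =>
    if x i = y i then (if δ = 0 then K1 else 0) else (if δ = 0 then 0 else K2) with hE
  have step1 : ∀ σ : Fin m → Equiv.Perm (ZMod p),
      (if ((∑ i, σ i (x i)) = 0 ∧ (∑ i, σ i (y i)) = 0) then (1:ℝ) else 0)
        = ∑ a : Fin m → ZMod p, ∑ b : Fin m → ZMod p,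
            (∏ i, if (σ i (x i) = a i ∧ σ i (y i) = b i) then (1:ℝ) else 0)
              * (if ((∑ i, a i) = 0 ∧ (∑ i, b i) = 0) then (1:ℝ) else 0) := by
    intro σ
    exact (eval_two (fun i => σ i (x i)) (fun i => σ i (y i))
      (fun a b => if ((∑ i, a i) = 0 ∧ (∑ i, b i) = 0) then (1:ℝ) else 0)).symm
  have step2 : ∀ a b : Fin m → ZMod p,
      (∑ σ : Fin m → Equiv.Perm (ZMod p),
          ∏ i, if (σ i (x i) = a i ∧ σ i (y i) = b i) then (1:ℝ) else 0)
        = ∏ i, (if x i = y i then (if a i = b i then K1 else 0)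
            else (if a i = b i then 0 else K2)) := by
    intro a b
    have hsp := sum_prod_pi (ι := Fin m) (β := Equiv.Perm (ZMod p))
      (fun i g => if (g (x i) = a i ∧ g (y i) = b i) then (1:ℝ) else 0)
    rw [hsp]
    refine Finset.prod_congr rfl fun i _ => ?_
    rw [coord_eval hp (x i) (y i) (a i) (b i), hK1, hK2, hN]
  have hA : (∑ a : Fin m → ZMod p, if (∑ i, a i) = 0 then (1:ℝ) else 0) = (p:ℝ)^m / p := by
    have hz := zsum_count (ι := Fin m) (p := p)
    rw [Fintype.card_fin] at hz
    rw [eq_div_iff hp0]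
    linear_combination hz
  have hBsum : (∑ d : Fin m → ZMod p, (if (∑ i, d i) = 0 then (1:ℝ) else 0) * ∏ i, E i (d i))
      = K1^k * K2^r * ((((p:ℝ)-1)^r - (-1:ℝ)^r + (p:ℝ) * (-1:ℝ)^r) / p) := by
    have hElem : ∀ d : Fin m → ZMod p,
        (if (∑ i, d i) = 0 then (1:ℝ) else 0) * ∏ i, E i (d i)
        = K1^k * K2^r * (if ((∀ i, i ∉ D → d i = 0) ∧ (∀ i ∈ D, d i ≠ 0)
            ∧ (∑ i, d i) = 0) then (1:ℝ) else 0) := by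
      intro d
      have hsplit : (∏ i, E i (d i))
          = (∏ i ∈ univ.filter (fun i => x i = y i), (if d i = 0 then K1 else 0))
            * (∏ i ∈ D, (if d i = 0 then 0 else K2)) := by
        rw [hD, ← Finset.prod_filter_mul_prod_filter_not univ (fun i => x i = y i)
          (fun i => E i (d i))]
        congr 1
        · exact Finset.prod_congr rfl fun i hi => by
            rw [hE]; exact if_pos (mem_filter.mp hi).2
        · exact Finset.prod_congr rfl fun i hi => by
            rw [hE]; exact if_neg (mem_filter.mp hi).2
      have h1 : (∏ i ∈ univ.filter (fun i => x i = y i), (if d i = 0 then K1 else 0))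
          = K1 ^ k * (if (∀ i ∈ univ.filter (fun i => x i = y i), d i = 0)
              then (1:ℝ) else 0) := by
        have hc : ∀ i, (if d i = 0 then K1 else 0) = K1 * (if d i = 0 then (1:ℝ) else 0) := by
          intro i; by_cases h : d i = 0 <;> simp [h]
        rw [Finset.prod_congr rfl fun i _ => hc i, Finset.prod_mul_distrib,
          Finset.prod_const, Finset.prod_boole, hk]
        congr 1
        exact ite_inst _ _
      have h2 : (∏ i ∈ D, (if d i = 0 then 0 else K2))
          = K2 ^ r * (if (∀ i ∈ D, ¬ d i = 0) then (1:ℝ) else 0) := by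
        have hc : ∀ i, (if d i = 0 then (0:ℝ) else K2)
            = K2 * (if ¬ d i = 0 then (1:ℝ) else 0) := by
          intro i; by_cases h : d i = 0 <;> simp [h]
        rw [Finset.prod_congr rfl fun i _ => hc i, Finset.prod_mul_distrib,
          Finset.prod_const, Finset.prod_boole, hr]
        congr 1
        exact ite_inst _ _
      have hiff : (∀ i ∈ univ.filter (fun i => x i = y i), d i = 0)
          ↔ (∀ i, i ∉ D → d i = 0) := by
        constructor
        · intro h i hiD
          refine h i (mem_filter.mpr ⟨mem_univ i, ?_⟩)
          by_contra hxy
          exact hiD (by rw [hD]; exact mem_filter.mpr ⟨mem_univ i, hxy⟩)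
        · intro h i hiP
          refine h i ?_
          rw [hD]
          intro hmem
          exact (mem_filter.mp hmem).2 (mem_filter.mp hiP).2
      have hrw : (if ((∀ i, i ∉ D → d i = 0) ∧ (∀ i ∈ D, d i ≠ 0)
            ∧ (∑ i, d i) = 0) then (1:ℝ) else 0)
          = ((if (∀ i ∈ univ.filter (fun i => x i = y i), d i = 0) then (1:ℝ) else 0)
              * (if (∀ i ∈ D, ¬ d i = 0) then (1:ℝ) else 0))
            * (if (∑ i, d i) = 0 then (1:ℝ) else 0) := by
        rw [ind_mul_ind, ind_mul_ind]
        refine if_congr ?_ rfl rfl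
        constructor
        · rintro ⟨a', b', c'⟩
          exact ⟨⟨hiff.mpr a', b'⟩, c'⟩
        · rintro ⟨⟨a', b'⟩, c'⟩
          exact ⟨hiff.mp a', b', c'⟩
      rw [hsplit, h1, h2, hrw]
      ring
    rw [Finset.sum_congr rfl fun d _ => hElem d, ← Finset.mul_sum]
    congr 1
    have hzs := ZS_lemma (p := p) D (0 : ZMod p)
    rw [if_pos rfl, ← hr, mul_one] at hzs
    rw [eq_div_iff hp0, mul_comm]
    refine Eq.trans ?_ hzs
    congr 1
    exact Finset.sum_congr rfl fun d _ => ite_inst _ _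
  calc
    (∑ σ : Fin m → Equiv.Perm (ZMod p),
        if ((∑ i, σ i (x i)) = 0 ∧ (∑ i, σ i (y i)) = 0) then (1:ℝ) else 0)
      = ∑ σ : Fin m → Equiv.Perm (ZMod p), ∑ a : Fin m → ZMod p, ∑ b : Fin m → ZMod p,
          (∏ i, if (σ i (x i) = a i ∧ σ i (y i) = b i) then (1:ℝ) else 0)
            * (if ((∑ i, a i) = 0 ∧ (∑ i, b i) = 0) then (1:ℝ) else 0) :=
        Finset.sum_congr rfl fun σ _ => step1 σ
    _ = ∑ a : Fin m → ZMod p, ∑ b : Fin m → ZMod p,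
          (∑ σ : Fin m → Equiv.Perm (ZMod p),
            ∏ i, if (σ i (x i) = a i ∧ σ i (y i) = b i) then (1:ℝ) else 0)
            * (if ((∑ i, a i) = 0 ∧ (∑ i, b i) = 0) then (1:ℝ) else 0) := by
        rw [Finset.sum_comm]
        refine Finset.sum_congr rfl fun a _ => ?_
        rw [Finset.sum_comm]
        exact Finset.sum_congr rfl fun b _ => (Finset.sum_mul _ _ _).symm
    _ = ∑ a : Fin m → ZMod p, ∑ b : Fin m → ZMod p,
          (∏ i, (if x i = y i then (if a i = b i then K1 else 0)
            else (if a i = b i then 0 else K2)))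
            * (if ((∑ i, a i) = 0 ∧ (∑ i, b i) = 0) then (1:ℝ) else 0) :=
        Finset.sum_congr rfl fun a _ => Finset.sum_congr rfl fun b _ => by rw [step2]
    _ = ∑ a : Fin m → ZMod p, ∑ d : Fin m → ZMod p,
          (∏ i, (if x i = y i then (if a i = (a + d) i then K1 else 0)
            else (if a i = (a + d) i then 0 else K2)))
            * (if ((∑ i, a i) = 0 ∧ (∑ i, (a + d) i) = 0) then (1:ℝ) else 0) := by
        refine Finset.sum_congr rfl fun a _ => ?_
        refine (Fintype.sum_equiv (Equiv.addLeft a) _ _ fun d => ?_).symm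
        rw [Equiv.coe_addLeft]
    _ = ∑ a : Fin m → ZMod p, ∑ d : Fin m → ZMod p,
          (if (∑ i, a i) = 0 then (1:ℝ) else 0)
            * ((if (∑ i, d i) = 0 then (1:ℝ) else 0) * ∏ i, E i (d i)) := by
        refine Finset.sum_congr rfl fun a _ => Finset.sum_congr rfl fun d _ => ?_
        have h1 : (∏ i, (if x i = y i then (if a i = (a + d) i then K1 else 0)
              else (if a i = (a + d) i then 0 else K2))) = ∏ i, E i (d i) := by
          refine Finset.prod_congr rfl fun i _ => ?_
          have hiff : (a i = (a + d) i) ↔ d i = 0 := by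
            rw [Pi.add_apply]; exact left_eq_add
          simp only [hE]
          by_cases hxy : x i = y i
          · rw [if_pos hxy, if_pos hxy]
            exact if_congr hiff rfl rfl
          · rw [if_neg hxy, if_neg hxy]
            exact if_congr hiff rfl rfl
        have h2 : (if ((∑ i, a i) = 0 ∧ (∑ i, (a + d) i) = 0) then (1:ℝ) else 0)
            = (if (∑ i, a i) = 0 then (1:ℝ) else 0)
              * (if (∑ i, d i) = 0 then (1:ℝ) else 0) := by
          rw [ind_mul_ind]
          refine if_congr ?_ rfl rfl
          have hsum : (∑ i, (a + d) i) = (∑ i, a i) + (∑ i, d i) := by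
            simp [Finset.sum_add_distrib]
          constructor
          · rintro ⟨ha', hb'⟩
            refine ⟨ha', ?_⟩
            rw [hsum, ha', zero_add] at hb'
            exact hb'
          · rintro ⟨ha', hb'⟩
            exact ⟨ha', by rw [hsum, ha', hb', add_zero]⟩
        rw [h1, h2]
        ring
    _ = (∑ a : Fin m → ZMod p, if (∑ i, a i) = 0 then (1:ℝ) else 0)
          * (∑ d : Fin m → ZMod p,
              (if (∑ i, d i) = 0 then (1:ℝ) else 0) * ∏ i, E i (d i)) := by
        simp_rw [← Finset.mul_sum]
        exact (Finset.sum_mul _ _ _).symm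
    _ = ((p:ℝ)^m / p) * (K1^k * K2^r
          * ((((p:ℝ)-1)^r - (-1:ℝ)^r + (p:ℝ) * (-1:ℝ)^r) / p)) := by rw [hA, hBsum]
    _ = N ^ m * ((1 / (p:ℝ)^2) * (1 + ((p:ℝ) - 1) * (-1 / ((p:ℝ) - 1)) ^ r)) := by
        have hpm : (p:ℝ)^m = (p:ℝ)^k * (p:ℝ)^r := by rw [← pow_add, hkr]
        have hNm : N^m = N^k * N^r := by rw [← pow_add, hkr]
        have hq : (-1 / ((p:ℝ)-1))^r = (-1:ℝ)^r / ((p:ℝ)-1)^r := div_pow _ _ r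
        rw [hq, hNm, hpm, hK1, hK2, div_pow, div_pow, mul_pow]
        have hppk : ((p:ℝ))^k ≠ 0 := pow_ne_zero _ hp0
        have hppr : ((p:ℝ))^r ≠ 0 := pow_ne_zero _ hp0
        have hppr1 : (((p:ℝ)-1))^r ≠ 0 := pow_ne_zero _ hp1
        field_simp
        ring
section final
variable {p : ℕ} [NeZero p]

lemma ind_sum_single (a : ZMod p) : ∑ t : ZMod p, (if t = a then (1:ℝ) else 0) = 1 := by
  rw [Finset.sum_ite_eq' univ a (fun _ => (1:ℝ))]
  simp

lemma ker_idem (hp : 2 ≤ p) (a b : ZMod p) :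
    ∑ t : ZMod p, (((if t = a then (1:ℝ) else 0) - 1/p)
        * ((if t = b then (1:ℝ) else 0) - 1/p))
      = (if a = b then (1:ℝ) else 0) - 1/p := by
  have hp0 : (p:ℝ) ≠ 0 := Nat.cast_ne_zero.mpr (NeZero.ne p)
  have h1 : ∑ t : ZMod p, (if t = a then (1:ℝ) else 0) * (if t = b then (1:ℝ) else 0)
      = (if a = b then (1:ℝ) else 0) := by
    have hpt : ∀ t : ZMod p, (if t = a then (1:ℝ) else 0) * (if t = b then (1:ℝ) else 0)
        = (if t = a then (if a = b then (1:ℝ) else 0) else 0) := by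
      intro t
      by_cases h : t = a
      · subst h
        by_cases h2 : t = b <;> simp [h2]
      · simp [h]
    rw [Finset.sum_congr rfl fun t _ => hpt t,
      Finset.sum_ite_eq' univ a (fun _ => (if a = b then (1:ℝ) else 0))]
    simp
  have expand : ∀ t : ZMod p,
      (((if t = a then (1:ℝ) else 0) - 1/p) * ((if t = b then (1:ℝ) else 0) - 1/p))
      = (if t = a then (1:ℝ) else 0) * (if t = b then (1:ℝ) else 0)
        - (1/p) * (if t = a then (1:ℝ) else 0)
        - (1/p) * (if t = b then (1:ℝ) else 0) + 1/(p:ℝ)^2 := by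
    intro t; ring
  rw [Finset.sum_congr rfl fun t _ => expand t]
  rw [Finset.sum_add_distrib, Finset.sum_sub_distrib, Finset.sum_sub_distrib,
    ← Finset.mul_sum, ← Finset.mul_sum, h1, ind_sum_single a, ind_sum_single b,
    Finset.sum_const, Finset.card_univ, ZMod.card, nsmul_eq_mul]
  field_simp
  ring

end final

open Finset in
theorem stmt10 (p m : ℕ) [NeZero p] (hp : 2 ≤ p) (hm : 1 ≤ m) (hmp : m < p)
    (v : (Fin m → ZMod p) → ℝ)
    (hnorm : ∑ x, (v x) ^ 2 = 1)
    (hperp : ∀ (i : Fin m) (a : ZMod p),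
      ∑ x ∈ Finset.univ.filter (fun x : Fin m → ZMod p => x i = a), v x = 0) :
    (∑ σ : Fin m → Equiv.Perm (ZMod p),
        (∑ x, (if (∑ i, σ i (x i)) = 0 then (1 : ℝ) else 0) * v x) ^ 2) /
      (Fintype.card (Fin m → Equiv.Perm (ZMod p)) : ℝ) ≤
    (1 / (p : ℝ)) * Real.exp (((m : ℝ) - 1) / ((p : ℝ) - 1)) := by
  have hp0 : (p:ℝ) ≠ 0 := Nat.cast_ne_zero.mpr (NeZero.ne p)
  have hp2 : (2:ℝ) ≤ (p:ℝ) := by exact_mod_cast hp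
  have hppos : (0:ℝ) < p := by linarith
  have hp1pos : (0:ℝ) < (p:ℝ) - 1 := by linarith
  have hp1 : ((p:ℝ) - 1) ≠ 0 := ne_of_gt hp1pos
  set N : ℝ := (Fintype.card (Equiv.Perm (ZMod p)) : ℝ) with hN
  have hNpos : 0 < N := by
    rw [hN]
    exact_mod_cast Fintype.card_pos
  have hcard : (Fintype.card (Fin m → Equiv.Perm (ZMod p)) : ℝ) = N ^ m := by
    rw [Fintype.card_fun, Fintype.card_fin, hN]
    push_cast
    ring
  -- the projection kernel
  set π : ZMod p → ZMod p → ℝ := fun a b => (if a = b then (1:ℝ) else 0) - 1/p with hπ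
  set Pv : (Fin m → ZMod p) → ℝ := fun x => ∑ z : Fin m → ZMod p,
    (∏ i, π (x i) (z i)) * v z with hPv
  set T : ℝ := ∑ x : Fin m → ZMod p, ∑ z : Fin m → ZMod p,
    (v x * v z) * ∏ i, π (x i) (z i) with hT
  -- Step A : expand the square
  have hnum : (∑ σ : Fin m → Equiv.Perm (ZMod p),
      (∑ x, (if (∑ i, σ i (x i)) = 0 then (1 : ℝ) else 0) * v x) ^ 2)
      = ∑ x : Fin m → ZMod p, ∑ y : Fin m → ZMod p, (v x * v y)
          * ∑ σ : Fin m → Equiv.Perm (ZMod p),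
            (if ((∑ i, σ i (x i)) = 0 ∧ (∑ i, σ i (y i)) = 0) then (1:ℝ) else 0) := by
    have e1 : ∀ σ : Fin m → Equiv.Perm (ZMod p),
        (∑ x, (if (∑ i, σ i (x i)) = 0 then (1 : ℝ) else 0) * v x) ^ 2
        = ∑ x : Fin m → ZMod p, ∑ y : Fin m → ZMod p, (v x * v y)
            * (if ((∑ i, σ i (x i)) = 0 ∧ (∑ i, σ i (y i)) = 0) then (1:ℝ) else 0) := by
      intro σ
      rw [sq, Finset.sum_mul_sum]
      refine Finset.sum_congr rfl fun x _ => Finset.sum_congr rfl fun y _ => ?_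
      rw [← ind_mul_ind]
      ring
    rw [Finset.sum_congr rfl fun σ _ => e1 σ, Finset.sum_comm]
    refine Finset.sum_congr rfl fun x _ => ?_
    rw [Finset.sum_comm]
    refine Finset.sum_congr rfl fun y _ => ?_
    rw [← Finset.mul_sum]
  -- apply per-pair formula
  have hnum2 : (∑ σ : Fin m → Equiv.Perm (ZMod p),
      (∑ x, (if (∑ i, σ i (x i)) = 0 then (1 : ℝ) else 0) * v x) ^ 2)
      = N ^ m * ∑ x : Fin m → ZMod p, ∑ y : Fin m → ZMod p, (v x * v y)
          * ((1 / (p:ℝ)^2) * (1 + ((p:ℝ) - 1)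
            * (-1 / ((p:ℝ) - 1)) ^ (univ.filter (fun i => ¬ x i = y i)).card)) := by
    rw [hnum, Finset.mul_sum]
    refine Finset.sum_congr rfl fun x _ => ?_
    rw [Finset.mul_sum]
    refine Finset.sum_congr rfl fun y _ => ?_
    rw [pair_sum hp hm x y, ← hN]
    ring
  rw [hcard, hnum2, mul_div_cancel_left₀ _ (ne_of_gt (pow_pos hNpos m))]
  -- kill the constant term using hperp
  have hv0 : (∑ x : Fin m → ZMod p, v x) = 0 := by
    have i0 : Fin m := ⟨0, hm⟩
    rw [← Finset.sum_fiberwise_of_maps_to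
      (fun (x : Fin m → ZMod p) (_ : x ∈ univ) => mem_univ (x i0)) v]
    exact Finset.sum_eq_zero fun a _ => hperp i0 a
  -- rewrite the q-power via the kernel
  have hqker : ∀ x y : Fin m → ZMod p,
      (-1 / ((p:ℝ) - 1)) ^ (univ.filter (fun i => ¬ x i = y i)).card
        = ((p:ℝ)/((p:ℝ)-1))^m * ∏ i, π (x i) (y i) := by
    intro x y
    have h1 : ∀ i : Fin m, ((p:ℝ)/((p:ℝ)-1)) * π (x i) (y i)
        = (if x i = y i then (1:ℝ) else (-1 / ((p:ℝ) - 1))) := by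
      intro i
      simp only [hπ]
      by_cases hxy : x i = y i
      · rw [if_pos hxy, if_pos hxy]
        field_simp
      · rw [if_neg hxy, if_neg hxy]
        field_simp
        ring
    have h2 : (∏ i, (if x i = y i then (1:ℝ) else (-1 / ((p:ℝ) - 1))))
        = (-1 / ((p:ℝ) - 1)) ^ (univ.filter (fun i => ¬ x i = y i)).card := by
      rw [← Finset.prod_filter_mul_prod_filter_not univ (fun i => ¬ x i = y i)]
      have ha : (∏ i ∈ univ.filter (fun i => ¬ x i = y i),
          (if x i = y i then (1:ℝ) else (-1 / ((p:ℝ) - 1))))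
          = (-1 / ((p:ℝ) - 1)) ^ (univ.filter (fun i => ¬ x i = y i)).card := by
        rw [Finset.prod_congr rfl fun i hi => if_neg (mem_filter.mp hi).2,
          Finset.prod_const]
      have hb : (∏ i ∈ univ.filter (fun i => ¬ ¬ x i = y i),
          (if x i = y i then (1:ℝ) else (-1 / ((p:ℝ) - 1)))) = 1 := by
        rw [Finset.prod_congr rfl fun i hi => if_pos (not_not.mp (mem_filter.mp hi).2)]
        exact Finset.prod_const_one
      rw [ha, hb, mul_one]
    calc (-1 / ((p:ℝ) - 1)) ^ (univ.filter (fun i => ¬ x i = y i)).card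
        = ∏ i, (if x i = y i then (1:ℝ) else (-1 / ((p:ℝ) - 1))) := h2.symm
      _ = ∏ i, (((p:ℝ)/((p:ℝ)-1)) * π (x i) (y i)) :=
          (Finset.prod_congr rfl fun i _ => (h1 i)).symm
      _ = ((p:ℝ)/((p:ℝ)-1))^m * ∏ i, π (x i) (y i) := by
          rw [Finset.prod_mul_distrib, Finset.prod_const, Finset.card_univ,
            Fintype.card_fin]
  -- split the main sum
  have hS : (∑ x : Fin m → ZMod p, ∑ y : Fin m → ZMod p, (v x * v y)
          * ((1 / (p:ℝ)^2) * (1 + ((p:ℝ) - 1)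
            * (-1 / ((p:ℝ) - 1)) ^ (univ.filter (fun i => ¬ x i = y i)).card)))
      = (((p:ℝ)-1) / (p:ℝ)^2) * (((p:ℝ)/((p:ℝ)-1))^m * T) := by
    have e2 : ∀ x y : Fin m → ZMod p, (v x * v y)
        * ((1 / (p:ℝ)^2) * (1 + ((p:ℝ) - 1)
            * (-1 / ((p:ℝ) - 1)) ^ (univ.filter (fun i => ¬ x i = y i)).card))
        = (1 / (p:ℝ)^2) * (v x * v y)
          + ((((p:ℝ)-1) / (p:ℝ)^2) * (((p:ℝ)/((p:ℝ)-1))^m))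
            * ((v x * v y) * ∏ i, π (x i) (y i)) := by
      intro x y
      rw [hqker x y]
      ring
    rw [Finset.sum_congr rfl fun x _ => Finset.sum_congr rfl fun y _ => e2 x y]
    rw [Finset.sum_congr rfl fun x (_ : x ∈ univ) => Finset.sum_add_distrib,
      Finset.sum_add_distrib]
    have hz : ∑ x : Fin m → ZMod p, ∑ y : Fin m → ZMod p,
        (1 / (p:ℝ)^2) * (v x * v y) = 0 := by
      have : ∑ x : Fin m → ZMod p, ∑ y : Fin m → ZMod p,
          (1 / (p:ℝ)^2) * (v x * v y)
          = (1 / (p:ℝ)^2) * ((∑ x : Fin m → ZMod p, v x) * (∑ y : Fin m → ZMod p, v y)) := by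
        rw [Finset.sum_mul_sum, Finset.mul_sum]
        exact Finset.sum_congr rfl fun x _ => by rw [Finset.mul_sum]
      rw [this, hv0, zero_mul, mul_zero]
    rw [hz, zero_add]
    have : ∑ x : Fin m → ZMod p, ∑ y : Fin m → ZMod p,
        ((((p:ℝ)-1) / (p:ℝ)^2) * (((p:ℝ)/((p:ℝ)-1))^m))
          * ((v x * v y) * ∏ i, π (x i) (y i))
        = ((((p:ℝ)-1) / (p:ℝ)^2) * (((p:ℝ)/((p:ℝ)-1))^m)) * T := by
      rw [hT, Finset.mul_sum]
      exact Finset.sum_congr rfl fun x _ => by rw [Finset.mul_sum]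
    rw [this]
    ring
  rw [hS]
  -- bound T between 0 and 1
  have hPP : (∑ x : Fin m → ZMod p, Pv x * Pv x) = T := by
    have e3 : ∀ x : Fin m → ZMod p, Pv x * Pv x
        = ∑ y : Fin m → ZMod p, ∑ z : Fin m → ZMod p,
            (v y * v z) * ∏ i, (π (x i) (y i) * π (x i) (z i)) := by
      intro x
      simp only [hPv]
      rw [Finset.sum_mul_sum]
      refine Finset.sum_congr rfl fun y _ => Finset.sum_congr rfl fun z _ => ?_
      rw [Finset.prod_mul_distrib]
      ring
    rw [Finset.sum_congr rfl fun x _ => e3 x, Finset.sum_comm]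
    have e4 : ∀ y : Fin m → ZMod p,
        (∑ x : Fin m → ZMod p, ∑ z : Fin m → ZMod p,
          (v y * v z) * ∏ i, (π (x i) (y i) * π (x i) (z i)))
        = ∑ z : Fin m → ZMod p, (v y * v z) * ∏ i, π (y i) (z i) := by
      intro y
      rw [Finset.sum_comm]
      refine Finset.sum_congr rfl fun z _ => ?_
      rw [← Finset.mul_sum]
      congr 1
      have hsp := sum_prod_pi (ι := Fin m) (β := ZMod p)
        (fun i t => π t (y i) * π t (z i))
      rw [hsp]
      refine Finset.prod_congr rfl fun i _ => ?_
      have := ker_idem hp (y i) (z i)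
      simp only [hπ]
      exact this
    rw [Finset.sum_congr rfl fun y _ => e4 y, hT]
  have hTnn : 0 ≤ T := by
    rw [← hPP]
    exact Finset.sum_nonneg fun x _ => mul_self_nonneg _
  have hTle : T ≤ 1 := by
    have hcs := Finset.sum_mul_sq_le_sq_mul_sq univ (fun x : Fin m → ZMod p => Pv x) v
    have hPv_v : (∑ x : Fin m → ZMod p, Pv x * v x) = T := by
      rw [hT]
      refine Finset.sum_congr rfl fun x _ => ?_
      simp only [hPv]
      rw [Finset.sum_mul]
      refine Finset.sum_congr rfl fun z _ => ?_
      ring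
    have hPv2 : (∑ x : Fin m → ZMod p, Pv x ^ 2) = T := by
      simp_rw [sq]
      exact hPP
    rw [hPv_v, hPv2, hnorm, mul_one] at hcs
    nlinarith [hcs, hTnn]
  -- final numeric bound
  set c : ℝ := (p:ℝ)/((p:ℝ)-1) with hc
  have hc_pos : 0 < c := by rw [hc]; positivity
  have hstep1 : (((p:ℝ)-1) / (p:ℝ)^2) * (c^m * T)
      ≤ (((p:ℝ)-1) / (p:ℝ)^2) * c^m := by
    have h1 : (((p:ℝ)-1) / (p:ℝ)^2) * (c^m * T)
        = ((((p:ℝ)-1) / (p:ℝ)^2) * c^m) * T := by ring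
    have h2 : 0 ≤ (((p:ℝ)-1) / (p:ℝ)^2) * c^m := by positivity
    calc (((p:ℝ)-1) / (p:ℝ)^2) * (c^m * T)
        = ((((p:ℝ)-1) / (p:ℝ)^2) * c^m) * T := h1
      _ ≤ ((((p:ℝ)-1) / (p:ℝ)^2) * c^m) * 1 := by
          exact mul_le_mul_of_nonneg_left hTle h2
      _ = (((p:ℝ)-1) / (p:ℝ)^2) * c^m := mul_one _
  have heq : (((p:ℝ)-1) / (p:ℝ)^2) * c^m = (1/(p:ℝ)) * c^(m-1) := by
    have hmm : m - 1 + 1 = m := Nat.succ_pred_eq_of_pos hm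
    have hcm : c^m = c^(m-1) * c := by rw [← pow_succ, hmm]
    rw [hcm, hc]
    field_simp
  have hexp : c^(m-1) ≤ Real.exp (((m:ℝ)-1)/((p:ℝ)-1)) := by
    have hceq : c = 1/((p:ℝ)-1) + 1 := by
      rw [hc]
      field_simp
      ring
    have h2 : c ≤ Real.exp (1/((p:ℝ)-1)) := by
      rw [hceq]
      exact Real.add_one_le_exp _
    calc c^(m-1) ≤ (Real.exp (1/((p:ℝ)-1)))^(m-1) :=
          pow_le_pow_left₀ (le_of_lt hc_pos) h2 _
      _ = Real.exp (((m-1 : ℕ) : ℝ) * (1/((p:ℝ)-1))) := (Real.exp_nat_mul _ _).symm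
      _ = Real.exp (((m:ℝ)-1)/((p:ℝ)-1)) := by
          congr 1
          rw [Nat.cast_sub hm, Nat.cast_one]
          ring
  calc (((p:ℝ)-1) / (p:ℝ)^2) * (c^m * T)
      ≤ (((p:ℝ)-1) / (p:ℝ)^2) * c^m := hstep1
    _ = (1/(p:ℝ)) * c^(m-1) := heq
    _ ≤ (1/(p:ℝ)) * Real.exp (((m:ℝ)-1)/((p:ℝ)-1)) := by
        have : (0:ℝ) ≤ 1/(p:ℝ) := by positivity
        exact mul_le_mul_of_nonneg_left hexp this
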